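/- Let x ∈ ℝ, ε > 0, δ ∈ (0,1), and let N be a natural number with N ≥ 8·log(1/δ). Let X̂_1, …, X̂_N be i.i.d. integrable real-valued random variables on a probability space with E[|X̂_1 − x|] ≤ ε/4. Then with probability at least 1 − δ, every real number m that is a median of the sample — i.e., every m such that #{i : X̂_i ≤ m} ≥ N/2 and #{i : X̂_i ≥ m} ≥ N/2 — satisfies |m − x| ≤ ε. -/

import Mathlib

open MeasureTheory ProbabilityTheory

/-- Median-of-Means: if `X̂ 0, …, X̂ (N-1)` are i.i.d. integrable random variables with
`E[|X̂ 0 − x|] ≤ ε/4` and `N ≥ 8·log(1/δ)`, then with probability at least `1 − δ`, every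
median `m` of the sample (i.e. at least `N/2` of the values are `≤ m` and at least `N/2`
are `≥ m`) satisfies `|m − x| ≤ ε`. -/
theorem stmt_5 (x ε δ : ℝ) (hε : 0 < ε) (hδ0 : 0 < δ) (hδ1 : δ < 1)
    (N : ℕ) (hN : 8 * Real.log (1 / δ) ≤ (N : ℝ))
    (Ω : Type) [MeasurableSpace Ω] (P : Measure Ω) [IsProbabilityMeasure P]
    (Xh : ℕ → Ω → ℝ)
    (hmeas : ∀ i, Measurable (Xh i))
    (hint : ∀ i, Integrable (Xh i) P)
    (hindep : iIndepFun Xh P)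
    (hident : ∀ i, Measure.map (Xh i) P = Measure.map (Xh 0) P)
    (hmean : ∫ ω, |Xh 0 ω - x| ∂P ≤ ε / 4) :
    ENNReal.ofReal (1 - δ) ≤
      P {ω | ∀ m : ℝ,
        (N : ℝ) / 2 ≤ (((Finset.range N).filter fun i => Xh i ω ≤ m).card : ℝ) →
        (N : ℝ) / 2 ≤ (((Finset.range N).filter fun i => m ≤ Xh i ω).card : ℝ) →
        |m - x| ≤ ε} := by
  classical
  -- the bad-value set on ℝ and the indicator variables
  set B : Set ℝ := {y | ε < |y - x|} with hB_def
  have hB : MeasurableSet B := measurableSet_lt measurable_const ((measurable_id.sub_const x).abs)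
  set g : ℝ → ℝ := B.indicator (fun _ => (1:ℝ)) with hg_def
  have hgmeas : Measurable g := (measurable_const.indicator hB)
  set Z : ℕ → Ω → ℝ := fun i ω => g (Xh i ω) with hZ_def
  have hZmeas : ∀ i, Measurable (Z i) := fun i => hgmeas.comp (hmeas i)
  have hZindep : iIndepFun Z P :=
    hindep.comp (fun _ => g) (fun _ => hgmeas)
  have hZ01 : ∀ i ω, Z i ω = 0 ∨ Z i ω = 1 := by
    intro i ω
    by_cases h : Xh i ω ∈ B
    · right; simp [hZ_def, hg_def, Set.indicator_of_mem h]
    · left; simp [hZ_def, hg_def, Set.indicator_of_notMem h]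
  have hZnonneg : ∀ i ω, 0 ≤ Z i ω := by
    intro i ω; rcases hZ01 i ω with h | h <;> simp [h]
  -- all preimage probabilities equal
  have hA : ∀ i, MeasurableSet (Xh i ⁻¹' B) := fun i => (hmeas i) hB
  have pA : ∀ i, P (Xh i ⁻¹' B) = P (Xh 0 ⁻¹' B) := by
    intro i
    rw [← Measure.map_apply (hmeas i) hB, ← Measure.map_apply (hmeas 0) hB, hident i]
  -- Markov: p ≤ 1/4
  set p : ℝ := (P (Xh 0 ⁻¹' B)).toReal with hp_def
  have hp_nonneg : 0 ≤ p := ENNReal.toReal_nonneg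
  have hp : p ≤ 1 / 4 := by
    have hfi : Integrable (fun ω => |Xh 0 ω - x|) P := ((hint 0).sub (integrable_const x)).abs
    have hmar := mul_meas_ge_le_integral_of_nonneg
      (Filter.Eventually.of_forall fun ω => abs_nonneg _) hfi ε
    have hsub : (Xh 0 ⁻¹' B) ⊆ {ω | ε ≤ |Xh 0 ω - x|} := fun ω h => le_of_lt (show ε < |Xh 0 ω - x| from h)
    have hmono : p ≤ (P {ω | ε ≤ |Xh 0 ω - x|}).toReal := by
      apply ENNReal.toReal_mono (measure_ne_top _ _) (measure_mono hsub)
    change ε * (P {ω | ε ≤ |Xh 0 ω - x|}).toReal ≤ _ at hmar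
    nlinarith [hmar.trans hmean]
  -- mgf bound for each Z i at t = log 3
  set t : ℝ := Real.log 3 with ht_def
  have ht : 0 ≤ t := Real.log_nonneg (by norm_num)
  have hexp3 : Real.exp t = 3 := Real.exp_log (by norm_num)
  have hexpZ : ∀ i ω, Real.exp (t * Z i ω) = (Xh i ⁻¹' B).indicator (fun _ => (2:ℝ)) ω + 1 := by
    intro i ω
    by_cases h : Xh i ω ∈ B
    · have hz : Z i ω = 1 := by simp [hZ_def, hg_def, Set.indicator_of_mem h]
      simp [hz, Set.indicator_of_mem (show ω ∈ Xh i ⁻¹' B from h), hexp3]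
      norm_num
    · have hz : Z i ω = 0 := by simp [hZ_def, hg_def, Set.indicator_of_notMem h]
      simp [hz, Set.indicator_of_notMem (show ω ∉ Xh i ⁻¹' B from h)]
  have hintZ : ∀ i, Integrable (fun ω => Real.exp (t * Z i ω)) P := by
    intro i
    apply Integrable.congr (((integrable_const (2:ℝ)).indicator (hA i)).add (integrable_const 1))
    exact Filter.Eventually.of_forall fun ω => (hexpZ i ω).symm
  have hmgf : ∀ i, mgf (Z i) P t ≤ 3 / 2 := by
    intro i
    have : mgf (Z i) P t = 2 * p + 1 := by
      rw [mgf]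
      rw [integral_congr_ae (Filter.Eventually.of_forall (hexpZ i))]
      rw [integral_add ((integrable_const (2:ℝ)).indicator (hA i)) (integrable_const 1)]
      rw [integral_indicator_const _ (hA i), integral_const]
      simp [pA i, ← hp_def, mul_comm]
      exact congrArg ENNReal.toReal (pA i)
    rw [this]; linarith
  -- Chernoff
  set S : Ω → ℝ := fun ω => ∑ i ∈ Finset.range N, Z i ω with hS_def
  have hint_expS : Integrable (fun ω => Real.exp (t * (∑ i ∈ Finset.range N, Z i) ω)) P :=
    hZindep.integrable_exp_mul_sum hZmeas (fun i _ => hintZ i)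
  have hcher := measure_ge_le_exp_mul_mgf (X := ∑ i ∈ Finset.range N, Z i) (μ := P)
    ((N : ℝ) / 2) ht hint_expS
  rw [hZindep.mgf_sum hZmeas] at hcher
  have hprod : ∏ i ∈ Finset.range N, mgf (Z i) P t ≤ (3 / 2 : ℝ) ^ N := by
    calc ∏ i ∈ Finset.range N, mgf (Z i) P t ≤ ∏ _i ∈ Finset.range N, (3 / 2 : ℝ) :=
          Finset.prod_le_prod (fun i _ => mgf_nonneg) (fun i _ => hmgf i)
      _ = (3 / 2 : ℝ) ^ N := by simp [div_pow]
  -- numeric: exp(-t * N/2) * (3/2)^N ≤ exp(-N/8) ≤ δ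
  have hlog : Real.log (3 / 2) - Real.log 3 / 2 ≤ -(1 / 8) := by
    have h1 : Real.exp 1 < 256 / 81 := lt_of_lt_of_le Real.exp_one_lt_d9 (by norm_num)
    have h2 : Real.log (81 / 256 : ℝ) ≤ -1 := by
      rw [Real.log_le_iff_le_exp (by norm_num)]
      rw [Real.exp_neg]
      rw [le_inv_comm₀ (by norm_num) (Real.exp_pos 1)]
      · linarith
    have h3 : Real.log (81 / 256 : ℝ) = 4 * Real.log 3 - 8 * Real.log 2 := by
      rw [show (81 / 256 : ℝ) = 3 ^ 4 / 2 ^ 8 by norm_num,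
        Real.log_div (by norm_num) (by norm_num), Real.log_pow, Real.log_pow]
      push_cast; ring
    have h4 : Real.log (3 / 2) = Real.log 3 - Real.log 2 :=
      Real.log_div (by norm_num) (by norm_num)
    linarith
  have hnum : Real.exp (-t * ((N : ℝ) / 2)) * (3 / 2 : ℝ) ^ N ≤ δ := by
    have h32 : (3 / 2 : ℝ) ^ N = Real.exp ((N : ℝ) * Real.log (3 / 2)) := by
      rw [← Real.log_pow, Real.exp_log (by positivity)]
    rw [h32, ← Real.exp_add]
    have hstep : -t * ((N : ℝ) / 2) + (N : ℝ) * Real.log (3 / 2) ≤ Real.log δ := by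
      have hlogδ : Real.log (1 / δ) = -Real.log δ := by
        rw [one_div, Real.log_inv]
      have hN' : -((N : ℝ) / 8) ≤ Real.log δ := by rw [hlogδ] at hN; linarith
      have : -t * ((N : ℝ) / 2) + (N : ℝ) * Real.log (3 / 2)
          = (N : ℝ) * (Real.log (3 / 2) - Real.log 3 / 2) := by rw [ht_def]; ring
      rw [this]
      calc (N : ℝ) * (Real.log (3 / 2) - Real.log 3 / 2) ≤ (N : ℝ) * (-(1 / 8)) :=
            mul_le_mul_of_nonneg_left hlog (Nat.cast_nonneg N)
        _ = -((N : ℝ) / 8) := by ring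
        _ ≤ Real.log δ := hN'
    calc Real.exp _ ≤ Real.exp (Real.log δ) := Real.exp_le_exp.mpr hstep
      _ = δ := Real.exp_log hδ0
  have htail : P {ω | (N : ℝ) / 2 ≤ S ω} ≤ ENNReal.ofReal δ := by
    rw [ENNReal.le_ofReal_iff_toReal_le (measure_ne_top _ _) hδ0.le]
    have : {ω | (N : ℝ) / 2 ≤ S ω} = {ω | (N : ℝ) / 2 ≤ (∑ i ∈ Finset.range N, Z i) ω} := by
      ext ω; simp [hS_def]
    rw [this]
    calc (P _).toReal ≤ _ := hcher
      _ ≤ Real.exp (-t * ((N : ℝ) / 2)) * (3 / 2 : ℝ) ^ N := by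
          exact mul_le_mul_of_nonneg_left hprod (Real.exp_pos _).le
      _ ≤ δ := hnum
  -- the bad event is contained in the tail event
  set G : Set Ω := {ω | ∀ m : ℝ,
        (N : ℝ) / 2 ≤ (((Finset.range N).filter fun i => Xh i ω ≤ m).card : ℝ) →
        (N : ℝ) / 2 ≤ (((Finset.range N).filter fun i => m ≤ Xh i ω).card : ℝ) →
        |m - x| ≤ ε} with hG_def
  have hGc : Gᶜ ⊆ {ω | (N : ℝ) / 2 ≤ S ω} := by
    intro ω hω
    simp only [hG_def, Set.mem_compl_iff, Set.mem_setOf_eq, not_forall] at hω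
    obtain ⟨m, h1, h2, h3⟩ := hω
    have hm : ε < |m - x| := lt_of_not_ge h3
    -- a filter of indices where Z = 1
    have key : ∀ (s : Finset ℕ), s ⊆ Finset.range N → (∀ i ∈ s, Z i ω = 1) →
        (s.card : ℝ) ≤ S ω := by
      intro s hs hone
      have : (s.card : ℝ) = ∑ i ∈ s, Z i ω := by
        rw [Finset.sum_congr rfl hone]; simp
      rw [this, hS_def]
      exact Finset.sum_le_sum_of_subset_of_nonneg hs (fun i _ _ => hZnonneg i ω)
    rcases lt_abs.mp hm with hcase | hcase
    · -- m - x > ε : use h2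
      refine le_trans h2 (key _ (Finset.filter_subset _ _) ?_)
      intro i hi
      have hmle : m ≤ Xh i ω := (Finset.mem_filter.mp hi).2
      have : ε < |Xh i ω - x| := lt_of_lt_of_le hcase (le_trans (by linarith) (le_abs_self _))
      simp [hZ_def, hg_def, Set.indicator_of_mem (show Xh i ω ∈ B from this)]
    · -- x - m > ε : use h1
      refine le_trans h1 (key _ (Finset.filter_subset _ _) ?_)
      intro i hi
      have hmle : Xh i ω ≤ m := (Finset.mem_filter.mp hi).2
      have : ε < |Xh i ω - x| := by
        have : ε < -(Xh i ω - x) := by linarith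
        exact lt_of_lt_of_le this (neg_le_abs _)
      simp [hZ_def, hg_def, Set.indicator_of_mem (show Xh i ω ∈ B from this)]
  have hPGc : P Gᶜ ≤ ENNReal.ofReal δ := le_trans (measure_mono hGc) htail
  -- conclude
  have hunion : (1 : ENNReal) ≤ P G + ENNReal.ofReal δ := by
    calc (1 : ENNReal) = P Set.univ := (measure_univ).symm
      _ = P (G ∪ Gᶜ) := by rw [Set.union_compl_self]
      _ ≤ P G + P Gᶜ := measure_union_le _ _
      _ ≤ P G + ENNReal.ofReal δ := add_le_add_right hPGc _
  have : ENNReal.ofReal (1 - δ) = 1 - ENNReal.ofReal δ := by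
    rw [ENNReal.ofReal_sub _ hδ0.le, ENNReal.ofReal_one]
  rw [this]
  exact tsub_le_iff_right.mpr hunion
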